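/- Let n ≥ 2, s ∈ (0,1), σ ∈ (−1,1), and fix r, δ > 0, and set B := B_{r+δ}. Let E ⊆ H be a local minimizer of the fractional capillarity energy in H, and let E_k ⊆ H be a sequence of local minimizers in H with χ_{E_k} → χ_E in L¹_loc(ℝⁿ). Then limsup_{k→∞} [ 𝓘_s(E_k B, E_k^c H) + 𝓘_s(E_k B^c, E_k^c B H) ] ≤ 𝓘_s(E B, E^c H) + 𝓘_s(E B^c, E^c B H). -/

import Mathlib

open MeasureTheory Metric Set Filter
open scoped ENNReal NNReal Pointwise

noncomputable section

/-- `ℝⁿ` with the Euclidean norm. -/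
abbrev Rn (n : ℕ) := EuclideanSpace ℝ (Fin n)

/-- The fractional interaction `𝓘_s(A,B)` (`ℝ≥0∞`-valued). -/
def frI (n : ℕ) (s : ℝ) (A B : Set (Rn n)) : ℝ≥0∞ :=
  ∫⁻ p in A ×ˢ B, ENNReal.ofReal (‖p.1 - p.2‖ ^ (-((n : ℝ) + s)))

/-- The fractional interaction `𝓘_s(A,B)` (real-valued). -/
def frIr (n : ℕ) (s : ℝ) (A B : Set (Rn n)) : ℝ := (frI n s A B).toReal

/-- The last coordinate `x_n` of a point of `ℝⁿ`. -/
def lastCoord (n : ℕ) (x : Rn n) : ℝ :=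
  if h : 0 < n then x ⟨n - 1, Nat.sub_lt h one_pos⟩ else 0

/-- The upper half-space `H = {x ∈ ℝⁿ : x_n > 0}`. -/
def halfSpace (n : ℕ) : Set (Rn n) := {x | 0 < lastCoord n x}

/-- `E ⊆ H` is a local minimizer of the fractional capillarity energy in `H`. -/
def LocalMin (n : ℕ) (s σ : ℝ) (E : Set (Rn n)) : Prop :=
  ∀ R : ℝ, 0 < R →
    frI n s (E ∩ ball 0 R) (Eᶜ ∩ ball 0 R) < ⊤ ∧
    ∀ F : Set (Rn n), MeasurableSet F → F ⊆ halfSpace n →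
      F \ ball 0 R = E \ ball 0 R →
      frIr n s (E ∩ ball 0 R) (Eᶜ ∩ halfSpace n)
          + frIr n s (E ∩ (ball 0 R)ᶜ) (Eᶜ ∩ ball 0 R ∩ halfSpace n)
          + σ * frIr n s (E ∩ ball 0 R) (halfSpace n)ᶜ
        ≤ frIr n s (F ∩ ball 0 R) (Fᶜ ∩ halfSpace n)
          + frIr n s (F ∩ (ball 0 R)ᶜ) (Fᶜ ∩ ball 0 R ∩ halfSpace n)
          + σ * frIr n s (F ∩ ball 0 R) (halfSpace n)ᶜ

/-- The vertical coordinate `t` of a point of `ℝ^{n+1}`. -/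
def tcoord (n : ℕ) (X : Rn (n + 1)) : ℝ := X (Fin.last n)

/-- The horizontal part `x` of a point of `ℝ^{n+1}`. -/
def xpart (n : ℕ) (X : Rn (n + 1)) : Rn n := WithLp.toLp 2 (fun i : Fin n => X i.castSucc)

/-- The point `(x,t) ∈ ℝ^{n+1}`. -/
def emb (n : ℕ) (x : Rn n) (t : ℝ) : Rn (n + 1) :=
  WithLp.toLp 2 (Fin.snoc (α := fun _ : Fin (n + 1) => ℝ) (fun i => x i) t)

/-- The open upper half-space `ℝ^{n+1}_+ = {t > 0}`. -/
def upperHalf (n : ℕ) : Set (Rn (n + 1)) := {X | 0 < tcoord n X}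

/-- The fractional Poisson kernel `𝐏_s(x,t)`, normalized so that
`∫ 𝐏_s(x,t) dx = 1` for all `t > 0`. -/
def poissonKer (n : ℕ) (s : ℝ) (x : Rn n) (t : ℝ) : ℝ :=
  (∫ z : Rn n, (‖z‖ ^ 2 + 1) ^ (-(((n : ℝ) + s) / 2)))⁻¹ * t ^ s *
    (‖x‖ ^ 2 + t ^ 2) ^ (-(((n : ℝ) + s) / 2))

/-- The `s`-extension `𝐄_u` of a function `u : ℝⁿ → ℝ`. -/
def extu (n : ℕ) (s : ℝ) (u : Rn n → ℝ) (X : Rn (n + 1)) : ℝ :=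
  ∫ y, u y * poissonKer n s (xpart n X - y) (tcoord n X)

/-- The `s`-extension `𝐄_E = 𝐄_{χ_E}` of a set `E ⊆ ℝⁿ`. -/
def extE (n : ℕ) (s : ℝ) (E : Set (Rn n)) : Rn (n + 1) → ℝ :=
  extu n s (E.indicator fun _ => (1 : ℝ))

/-- The energy `𝓕_{s,σ}(U,Ω)`. -/
def energy (n : ℕ) (s σ : ℝ) (U : Rn (n + 1) → ℝ) (Ω : Set (Rn (n + 1))) : ℝ :=
  (∫ X in Ω ∩ upperHalf n, tcoord n X ^ (1 - s) * ‖fderiv ℝ U X‖ ^ 2)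
    + (σ - 1) *
      ∫ p in {x : Rn n | emb n x 0 ∈ Ω} ×ˢ (halfSpace n)ᶜ,
        U (emb n p.1 0) * ‖p.1 - p.2‖ ^ (-((n : ℝ) + s))

/-- The monotonicity quantity `Φ_E(r) = r^{s-n} 𝓕_{s,σ}(𝐄_E, 𝓑_r)`. -/
def Phi (n : ℕ) (s σ : ℝ) (E : Set (Rn n)) (r : ℝ) : ℝ :=
  r ^ (s - (n : ℝ)) * energy n s σ (extE n s E) (ball (0 : Rn (n + 1)) r)

/-- The fractional perimeter `Per_s(F,ω)` (real-valued). -/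
def perS (n : ℕ) (s : ℝ) (F ω : Set (Rn n)) : ℝ :=
  frIr n s (F ∩ ω) (Fᶜ ∩ ω) + frIr n s (F ∩ ω) (Fᶜ ∩ ωᶜ) + frIr n s (F ∩ ωᶜ) (Fᶜ ∩ ω)

/-- The fractional perimeter `Per_s(F,ω)` (`ℝ≥0∞`-valued). -/
def perSE (n : ℕ) (s : ℝ) (F ω : Set (Rn n)) : ℝ≥0∞ :=
  frI n s (F ∩ ω) (Fᶜ ∩ ω) + frI n s (F ∩ ω) (Fᶜ ∩ ωᶜ) + frI n s (F ∩ ωᶜ) (Fᶜ ∩ ω)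

/-- `Per_{s,σ}(F,B_R)`. -/
def perSigma (n : ℕ) (s σ : ℝ) (F : Set (Rn n)) (R : ℝ) : ℝ :=
  perS n s F (ball 0 R ∩ halfSpace n) + (σ - 1) * frIr n s (F ∩ ball 0 R) (halfSpace n)ᶜ

/-- The fractional capillarity energy `𝓒_{s,σ}(E,ω)`. -/
def capEnergy (n : ℕ) (s σ : ℝ) (E ω : Set (Rn n)) : ℝ :=
  frIr n s E (ω \ E) + σ * frIr n s E ωᶜ

/-- A set `Ω ⊆ ℝ^{n+1}` has Lipschitz boundary: near each boundary point, after an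
isometry of `ℝ^{n+1}`, the set is the region above the graph of a Lipschitz function. -/
def HasLipschitzBoundary (n : ℕ) (Ω : Set (Rn (n + 1))) : Prop :=
  ∀ p ∈ frontier Ω, ∃ (g : Rn (n + 1) ≃ᵢ Rn (n + 1)) (f : Rn n → ℝ) (K : ℝ≥0) (ε : ℝ),
    0 < ε ∧ LipschitzWith K f ∧
      Ω ∩ ball p ε = {X ∈ ball p ε | f (xpart n (g X)) < tcoord n (g X)}

/-- A set `ω ⊆ ℝⁿ` has `C¹` boundary: near each boundary point it is the sublevel set
of a `C¹` defining function with nonvanishing gradient. -/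
def HasC1Boundary (n : ℕ) (ω : Set (Rn n)) : Prop :=
  ∀ p ∈ frontier ω, ∃ (f : Rn n → ℝ) (U : Set (Rn n)), IsOpen U ∧ p ∈ U ∧
    ContDiffOn ℝ 1 f U ∧ (∀ q ∈ U, fderiv ℝ f q ≠ 0) ∧ ω ∩ U = {q ∈ U | f q < 0}

/-- Convergence `χ_{E_k} → χ_E` in `L¹_loc(ℝⁿ)`. -/
def TendstoL1loc (n : ℕ) (Ek : ℕ → Set (Rn n)) (E : Set (Rn n)) : Prop :=
  ∀ K : Set (Rn n), IsCompact K →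
    Tendsto (fun k => ∫ x in K,
        |(Ek k).indicator (fun _ => (1 : ℝ)) x - E.indicator (fun _ => (1 : ℝ)) x|)
      atTop (nhds 0)

/-- The quantity `M(ϑ,s)` appearing in the fractional Young law. -/
def Mfun (ϑ s : ℝ) : ℝ :=
  2 * ∫ r in Ioi (0 : ℝ), ∫ t in Ioo (0 : ℝ) ϑ,
      r * (r ^ 2 + 2 * r * Real.cos t + 1) ^ (-((2 + s) / 2))

/-! ### Auxiliary material for `stmt_15` -/

section Stmt15Aux

open scoped BigOperators

/-- The interaction kernel. -/
def iker (n : ℕ) (s : ℝ) (x y : Rn n) : ℝ≥0∞ :=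
  ENNReal.ofReal (‖x - y‖ ^ (-((n : ℝ) + s)))

lemma iker_symm (n : ℕ) (s : ℝ) (x y : Rn n) : iker n s x y = iker n s y x := by
  rw [iker, iker, norm_sub_rev]

lemma measurable_iker (n : ℕ) (s : ℝ) :
    Measurable (Function.uncurry (iker n s)) := by
  have h1 : Measurable fun p : Rn n × Rn n => ‖p.1 - p.2‖ :=
    (measurable_fst.sub measurable_snd).norm
  have h2 : Measurable fun p : Rn n × Rn n => ‖p.1 - p.2‖ ^ (-((n : ℝ) + s)) :=
    h1.pow measurable_const
  exact h2.ennreal_ofReal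

lemma measurable_iker_right (n : ℕ) (s : ℝ) (x : Rn n) :
    Measurable (fun y => iker n s x y) := by
  unfold iker
  have h1 : Measurable fun y : Rn n => ‖x - y‖ := (measurable_const.sub measurable_id).norm
  have h2 : Measurable fun y : Rn n => ‖x - y‖ ^ (-((n : ℝ) + s)) := h1.pow measurable_const
  exact h2.ennreal_ofReal

lemma frI_eq (n : ℕ) (s : ℝ) {A B : Set (Rn n)}
    (hA : MeasurableSet A) (hB : MeasurableSet B) :
    frI n s A B = ∫⁻ x in A, ∫⁻ y in B, iker n s x y := by
  rw [frI, Measure.volume_eq_prod, ← Measure.prod_restrict]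
  exact lintegral_prod _ (measurable_iker n s).aemeasurable

lemma frI_swap (n : ℕ) (s : ℝ) {A B : Set (Rn n)}
    (hA : MeasurableSet A) (hB : MeasurableSet B) :
    frI n s A B = ∫⁻ y in B, ∫⁻ x in A, iker n s x y := by
  rw [frI, Measure.volume_eq_prod, ← Measure.prod_restrict]
  exact lintegral_prod_symm _ (measurable_iker n s).aemeasurable

lemma frI_mono (n : ℕ) (s : ℝ) {A B A' B' : Set (Rn n)}
    (hA : A ⊆ A') (hB : B ⊆ B') : frI n s A B ≤ frI n s A' B' :=
  lintegral_mono_set (Set.prod_mono hA hB)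

lemma frI_union_right (n : ℕ) (s : ℝ) (A B₁ B₂ : Set (Rn n)) :
    frI n s A (B₁ ∪ B₂) ≤ frI n s A B₁ + frI n s A B₂ := by
  rw [frI, Set.prod_union]
  exact lintegral_union_le _ _ _

lemma frI_union_left (n : ℕ) (s : ℝ) (A₁ A₂ B : Set (Rn n)) :
    frI n s (A₁ ∪ A₂) B ≤ frI n s A₁ B + frI n s A₂ B := by
  rw [frI, Set.union_prod]
  exact lintegral_union_le _ _ _

lemma rpow_lt_aux {u v q : ℝ} (hu : 0 < u) (hv : 0 < v) (hq : 0 < q)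
    (h : u < v ^ (-q)) : v < u ^ (-(1 / q)) := by
  have hq' : (0 : ℝ) < 1 / q := by positivity
  have h1 : (v ^ (-q)) ^ (-(1 / q)) < u ^ (-(1 / q)) :=
    Real.rpow_lt_rpow_of_neg hu h (by linarith)
  have h2 : (v ^ (-q)) ^ (-(1 / q)) = v := by
    rw [← Real.rpow_mul hv.le]
    have h3 : -q * -(1 / q) = 1 := by field_simp
    rw [h3, Real.rpow_one]
  rwa [h2] at h1

lemma shift_lintegral (n : ℕ) (q : ℝ) (x : Rn n) (t : ℝ) :
    ∫⁻ y in {y : Rn n | t ≤ ‖y - x‖}, ENNReal.ofReal (‖x - y‖ ^ q) =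
      ∫⁻ z in {z : Rn n | t ≤ ‖z‖}, ENNReal.ofReal (‖z‖ ^ q) := by
  have hS : MeasurableSet {z : Rn n | t ≤ ‖z‖} :=
    (isClosed_le continuous_const continuous_norm).measurableSet
  have hS' : MeasurableSet {y : Rn n | t ≤ ‖y - x‖} :=
    (isClosed_le continuous_const (continuous_id.sub continuous_const).norm).measurableSet
  set F : Rn n → ℝ≥0∞ := fun z => {z : Rn n | t ≤ ‖z‖}.indicator
    (fun z => ENNReal.ofReal (‖z‖ ^ q)) z with hF
  have key : ∀ y : Rn n, {y : Rn n | t ≤ ‖y - x‖}.indicator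
      (fun y => ENNReal.ofReal (‖x - y‖ ^ q)) y = F (y - x) := by
    intro y
    simp only [hF, Set.indicator_apply, Set.mem_setOf_eq]
    by_cases hy : t ≤ ‖y - x‖
    · rw [if_pos hy, if_pos hy, norm_sub_rev]
    · rw [if_neg hy, if_neg hy]
  rw [← lintegral_indicator hS' _, ← lintegral_indicator hS _]
  calc ∫⁻ y, {y : Rn n | t ≤ ‖y - x‖}.indicator
        (fun y => ENNReal.ofReal (‖x - y‖ ^ q)) y
      = ∫⁻ y, F (y - x) := lintegral_congr key
    _ = ∫⁻ z, F z := lintegral_sub_right_eq_self F x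

lemma J_le (n : ℕ) (s : ℝ) (hn : 0 < n) (hs : 0 < s) {t : ℝ} (ht : 0 < t) :
    ∫⁻ z in {z : Rn n | t ≤ ‖z‖}, ENNReal.ofReal (‖z‖ ^ (-((n : ℝ) + s))) ≤
      volume (ball (0 : Rn n) 1) * ENNReal.ofReal (((n : ℝ) + s) / s) *
        ENNReal.ofReal (t ^ (-s)) := by
  haveI : Nonempty (Fin n) := ⟨⟨0, hn⟩⟩
  set p : ℝ := (n : ℝ) + s with hp
  have hp0 : 0 < p := by rw [hp]; positivity
  have hnp : (n : ℝ) < p := by rw [hp]; linarith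
  set a : ℝ := (n : ℝ) / p with ha
  have ha0 : 0 ≤ a := by rw [ha]; positivity
  have ha1 : a < 1 := by rw [ha, div_lt_one hp0]; exact hnp
  set T : ℝ := t ^ (-p) with hT
  have hT0 : 0 < T := Real.rpow_pos_of_pos ht _
  set c1 : ℝ≥0∞ := volume (ball (0 : Rn n) 1) with hc1
  have hSm : MeasurableSet {z : Rn n | t ≤ ‖z‖} :=
    (isClosed_le continuous_const continuous_norm).measurableSet
  have hfm : Measurable fun z : Rn n => ‖z‖ ^ (-p) :=
    measurable_norm.pow measurable_const
  have hnn : 0 ≤ᵐ[volume.restrict {z : Rn n | t ≤ ‖z‖}]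
      fun z : Rn n => ‖z‖ ^ (-p) :=
    ae_of_all _ fun z => Real.rpow_nonneg (norm_nonneg z) _
  rw [lintegral_eq_lintegral_meas_lt _ hnn hfm.aemeasurable]
  have key : ∀ u ∈ Ioi (0 : ℝ),
      (volume.restrict {z : Rn n | t ≤ ‖z‖}) {z : Rn n | u < ‖z‖ ^ (-p)} ≤
        (Ioc (0 : ℝ) T).indicator (fun u => c1 * ENNReal.ofReal (u ^ (-a))) u := by
    intro u hu
    have hu0 : (0 : ℝ) < u := hu
    by_cases huT : u ≤ T
    · rw [Set.indicator_of_mem (Set.mem_Ioc.mpr ⟨hu0, huT⟩)]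
      rw [Measure.restrict_apply' hSm]
      have hsub : {z : Rn n | u < ‖z‖ ^ (-p)} ∩ {z : Rn n | t ≤ ‖z‖} ⊆
          ball (0 : Rn n) (u ^ (-(1 / p))) := by
        rintro z ⟨hz1, _⟩
        simp only [Set.mem_setOf_eq] at hz1
        have hz0 : 0 < ‖z‖ := by
          rcases eq_or_lt_of_le (norm_nonneg z) with h0 | h0
          · exfalso
            rw [← h0, Real.zero_rpow (neg_ne_zero.mpr hp0.ne')] at hz1
            exact absurd hz1 (not_lt.mpr hu0.le)
          · exact h0
        have := rpow_lt_aux hu0 hz0 hp0 hz1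
        simpa [mem_ball_zero_iff] using this
      refine (measure_mono hsub).trans ?_
      rw [Measure.addHaar_ball (μ := (volume : Measure (Rn n))) (0 : Rn n)
        (Real.rpow_nonneg hu0.le (-(1 / p))), finrank_euclideanSpace_fin]
      have hpow : (u ^ (-(1 / p))) ^ (n : ℕ) = u ^ (-a) := by
        rw [← Real.rpow_natCast (u ^ (-(1 / p))) n, ← Real.rpow_mul hu0.le]
        congr 1
        rw [ha]; field_simp
      rw [hpow, mul_comm]
    · push_neg at huT
      rw [Set.indicator_of_notMem (fun hmem => absurd hmem.2 (not_le.mpr huT))]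
      have hempty : {z : Rn n | u < ‖z‖ ^ (-p)} ∩ {z : Rn n | t ≤ ‖z‖} = ∅ := by
        ext z
        simp only [Set.mem_inter_iff, Set.mem_setOf_eq, Set.mem_empty_iff_false,
          iff_false, not_and]
        intro hz1 hz2
        have hle : ‖z‖ ^ (-p) ≤ t ^ (-p) :=
          Real.rpow_le_rpow_of_nonpos ht hz2 (by linarith)
        rw [← hT] at hle
        exact absurd (hz1.trans_le hle) (not_lt.mpr huT.le)
      rw [Measure.restrict_apply' hSm, hempty]
      simp
  calc ∫⁻ u in Ioi (0 : ℝ), (volume.restrict {z : Rn n | t ≤ ‖z‖})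
        {z : Rn n | u < ‖z‖ ^ (-p)}
      ≤ ∫⁻ u in Ioi (0 : ℝ),
          (Ioc (0 : ℝ) T).indicator (fun u => c1 * ENNReal.ofReal (u ^ (-a))) u := by
        refine setLIntegral_mono ?_ key
        exact Measurable.indicator
          (measurable_const.mul ((measurable_id.pow measurable_const).ennreal_ofReal))
          measurableSet_Ioc
    _ = ∫⁻ u in Ioc (0 : ℝ) T, c1 * ENNReal.ofReal (u ^ (-a)) := by
        rw [lintegral_indicator measurableSet_Ioc _,
          Measure.restrict_restrict measurableSet_Ioc,
          Set.inter_eq_left.mpr Ioc_subset_Ioi_self]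
    _ = c1 * ∫⁻ u in Ioc (0 : ℝ) T, ENNReal.ofReal (u ^ (-a)) := by
        rw [lintegral_const_mul]
        exact (measurable_id.pow measurable_const).ennreal_ofReal
    _ ≤ c1 * ENNReal.ofReal (((n : ℝ) + s) / s) * ENNReal.ofReal (t ^ (-s)) := by
        have hint : IntegrableOn (fun u : ℝ => u ^ (-a)) (Ioc (0 : ℝ) T) := by
          have h4 := intervalIntegral.intervalIntegrable_rpow' (a := 0) (b := T)
            (r := -a) (by linarith)
          rwa [intervalIntegrable_iff_integrableOn_Ioc_of_le hT0.le] at h4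
        have hnn2 : 0 ≤ᵐ[volume.restrict (Ioc (0 : ℝ) T)] fun u : ℝ => u ^ (-a) := by
          filter_upwards [ae_restrict_mem measurableSet_Ioc] with u hu
          exact Real.rpow_nonneg hu.1.le _
        rw [← MeasureTheory.ofReal_integral_eq_lintegral_ofReal hint hnn2]
        have h1a : 1 - a = s / p := by
          rw [ha, one_sub_div hp0.ne']
          congr 1
          rw [hp]; ring
        have hval : ∫ u in Ioc (0 : ℝ) T, u ^ (-a) = T ^ (1 - a) / (1 - a) := by
          rw [← intervalIntegral.integral_of_le hT0.le,
            integral_rpow (Or.inl (by linarith)),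
            Real.zero_rpow (by linarith)]
          ring_nf
        have hTa : T ^ (1 - a) = t ^ (-s) := by
          rw [hT, ← Real.rpow_mul ht.le]
          congr 1
          rw [h1a]
          field_simp
        have hval2 : ∫ u in Ioc (0 : ℝ) T, u ^ (-a) = t ^ (-s) * (p / s) := by
          rw [hval, hTa, h1a, div_div_eq_mul_div, mul_div_assoc]
        rw [hval2, ENNReal.ofReal_mul (Real.rpow_nonneg ht.le _)]
        rw [← hp]
        ring_nf
        exact le_rfl

lemma layer_fin (n : ℕ) {S : Set (Rn n)} (hS : MeasurableSet S) {f : Rn n → ℝ}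
    (hfm : Measurable f) (hnn : ∀ x ∈ S, 0 ≤ f x) {C : ℝ≥0∞} (hC : C ≠ ⊤)
    {M b : ℝ} (hM : 0 ≤ M) (hb : b < -1)
    (hbound : ∀ u : ℝ, 0 < u →
      volume.restrict S {x | u < f x} ≤ C * ENNReal.ofReal (min M (u ^ b))) :
    ∫⁻ x in S, ENNReal.ofReal (f x) < ⊤ := by
  have hnn' : 0 ≤ᵐ[volume.restrict S] f := by
    filter_upwards [ae_restrict_mem hS] with x hx using hnn x hx
  rw [lintegral_eq_lintegral_meas_lt _ hnn' hfm.aemeasurable]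
  have hmono : Measurable fun u : ℝ => C * ENNReal.ofReal (min M (u ^ b)) :=
    measurable_const.mul
      ((measurable_const.min (measurable_id.pow measurable_const)).ennreal_ofReal)
  calc ∫⁻ u in Ioi (0 : ℝ), (volume.restrict S) {x | u < f x}
      ≤ ∫⁻ u in Ioi (0 : ℝ), C * ENNReal.ofReal (min M (u ^ b)) :=
        setLIntegral_mono hmono fun u hu => hbound u hu
    _ = C * ∫⁻ u in Ioi (0 : ℝ), ENNReal.ofReal (min M (u ^ b)) := by
        rw [lintegral_const_mul]
        exact (measurable_const.min (measurable_id.pow measurable_const)).ennreal_ofReal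
    _ < ⊤ := by
        refine ENNReal.mul_lt_top hC.lt_top ?_
        have hsplit : Ioi (0 : ℝ) = Ioc (0 : ℝ) 1 ∪ Ioi (1 : ℝ) :=
          (Ioc_union_Ioi_eq_Ioi zero_le_one).symm
        rw [hsplit]
        refine lt_of_le_of_lt (lintegral_union_le _ _ _) ?_
        refine ENNReal.add_lt_top.mpr ⟨?_, ?_⟩
        · calc ∫⁻ u in Ioc (0 : ℝ) 1, ENNReal.ofReal (min M (u ^ b))
              ≤ ∫⁻ _ in Ioc (0 : ℝ) 1, ENNReal.ofReal M :=
                lintegral_mono fun u => ENNReal.ofReal_le_ofReal (min_le_left _ _)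
            _ = ENNReal.ofReal M * volume (Ioc (0 : ℝ) 1) := by
                rw [setLIntegral_const]
            _ < ⊤ := by
                rw [Real.volume_Ioc]
                exact ENNReal.mul_lt_top ENNReal.ofReal_lt_top ENNReal.ofReal_lt_top
        · calc ∫⁻ u in Ioi (1 : ℝ), ENNReal.ofReal (min M (u ^ b))
              ≤ ∫⁻ u in Ioi (1 : ℝ), ENNReal.ofReal (u ^ b) :=
                lintegral_mono fun u => ENNReal.ofReal_le_ofReal (min_le_right _ _)
            _ < ⊤ := by
                have hint : IntegrableOn (fun u : ℝ => u ^ b) (Ioi (1 : ℝ)) :=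
                  integrableOn_Ioi_rpow_of_lt hb one_pos
                have hnn2 : 0 ≤ᵐ[volume.restrict (Ioi (1 : ℝ))] fun u : ℝ => u ^ b := by
                  filter_upwards [ae_restrict_mem measurableSet_Ioi] with u hu
                  exact Real.rpow_nonneg (by linarith [mem_Ioi.mp hu]) _
                rw [← MeasureTheory.ofReal_integral_eq_lintegral_ofReal hint hnn2]
                exact ENNReal.ofReal_lt_top

lemma pow_sub_pow_le_aux (m : ℕ) {a R : ℝ} (ha : 0 ≤ a) (haR : a ≤ R) :
    R ^ m - a ^ m ≤ (m : ℝ) * R ^ (m - 1) * (R - a) := by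
  have hR0 : 0 ≤ R := ha.trans haR
  have h := geom_sum₂_mul R a m
  rw [← h]
  have hsum : (∑ i ∈ Finset.range m, R ^ i * a ^ (m - 1 - i)) ≤ (m : ℝ) * R ^ (m - 1) := by
    calc (∑ i ∈ Finset.range m, R ^ i * a ^ (m - 1 - i))
        ≤ ∑ i ∈ Finset.range m, R ^ (m - 1) := by
          refine Finset.sum_le_sum fun i hi => ?_
          have hi' : i < m := Finset.mem_range.mp hi
          have h1 : a ^ (m - 1 - i) ≤ R ^ (m - 1 - i) := pow_le_pow_left₀ ha haR _
          have h2 : R ^ i * a ^ (m - 1 - i) ≤ R ^ i * R ^ (m - 1 - i) :=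
            mul_le_mul_of_nonneg_left h1 (pow_nonneg hR0 i)
          refine h2.trans (le_of_eq ?_)
          rw [← pow_add]
          congr 1
          omega
      _ = (m : ℝ) * R ^ (m - 1) := by
          rw [Finset.sum_const, Finset.card_range, nsmul_eq_mul]
  exact mul_le_mul_of_nonneg_right hsum (by linarith)

lemma cross_bound (n : ℕ) (s : ℝ) (hn : 0 < n) (hs : 0 < s)
    {S T' : Set (Rn n)} (hS : MeasurableSet S) {d : Rn n → ℝ}
    (hd : ∀ x ∈ S, 0 < d x) (hsep : ∀ x ∈ S, ∀ y ∈ T', d x ≤ ‖y - x‖) :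
    ∫⁻ x in S, ∫⁻ y in T', iker n s x y ≤
      volume (ball (0 : Rn n) 1) * ENNReal.ofReal (((n : ℝ) + s) / s) *
        ∫⁻ x in S, ENNReal.ofReal (d x ^ (-s)) := by
  set Cc : ℝ≥0∞ := volume (ball (0 : Rn n) 1) * ENNReal.ofReal (((n : ℝ) + s) / s)
    with hCc
  have hCtop : Cc ≠ ⊤ :=
    ENNReal.mul_ne_top measure_ball_lt_top.ne ENNReal.ofReal_ne_top
  rw [← lintegral_const_mul' _ _ hCtop]
  refine lintegral_mono_ae ?_
  filter_upwards [ae_restrict_mem hS] with x hx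
  calc ∫⁻ y in T', iker n s x y
      ≤ ∫⁻ y in {y : Rn n | d x ≤ ‖y - x‖}, iker n s x y := by
        refine lintegral_mono_set fun y hy => ?_
        exact hsep x hx y hy
    _ = ∫⁻ z in {z : Rn n | d x ≤ ‖z‖},
          ENNReal.ofReal (‖z‖ ^ (-((n : ℝ) + s))) := shift_lintegral n _ x (d x)
    _ ≤ Cc * ENNReal.ofReal (d x ^ (-s)) := J_le n s hn hs (hd x hx)

lemma coord_le_norm (n : ℕ) (x : Rn n) (i : Fin n) : |x i| ≤ ‖x‖ := by
  rw [EuclideanSpace.norm_eq]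
  have h1 : |x i| = Real.sqrt (‖x i‖ ^ 2) := by
    rw [Real.sqrt_sq_eq_abs, Real.norm_eq_abs, abs_abs]
  rw [h1]
  apply Real.sqrt_le_sqrt
  exact Finset.single_le_sum (f := fun j => ‖x j‖ ^ 2)
    (fun j _ => sq_nonneg _) (Finset.mem_univ i)

lemma pi_vol (n : ℕ) (sets : Fin n → Set ℝ) (hsets : ∀ i, MeasurableSet (sets i)) :
    volume {x : Rn n | ∀ i, x i ∈ sets i} = ∏ i, volume (sets i) := by
  have hpres := EuclideanSpace.volume_preserving_symm_measurableEquiv_toLp (ι := Fin n)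
  have heq : {x : Rn n | ∀ i, x i ∈ sets i} =
      (MeasurableEquiv.toLp 2 (Fin n → ℝ)).symm ⁻¹' (Set.pi univ sets) := by
    ext x
    simp [Set.mem_preimage, Set.mem_univ_pi]
  rw [heq, hpres.measure_preimage
    ((MeasurableSet.univ_pi hsets).nullMeasurableSet)]
  exact volume_pi_pi sets

lemma W_fin (n : ℕ) (s : ℝ) (hn : 0 < n) (hs0 : 0 < s) (hs1 : s < 1)
    {R : ℝ} (hR : 0 < R) :
    ∫⁻ x in ball (0 : Rn n) R, ∫⁻ y in (ball (0 : Rn n) R)ᶜ, iker n s x y < ⊤ := by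
  haveI : Nonempty (Fin n) := ⟨⟨0, hn⟩⟩
  have hsep : ∀ x ∈ ball (0 : Rn n) R, ∀ y ∈ (ball (0 : Rn n) R)ᶜ,
      R - ‖x‖ ≤ ‖y - x‖ := by
    intro x hx y hy
    have hy' : R ≤ ‖y‖ := by
      by_contra hcon
      exact hy (mem_ball_zero_iff.mpr (not_le.mp hcon))
    have := norm_sub_norm_le y x
    linarith
  have hd : ∀ x ∈ ball (0 : Rn n) R, 0 < R - ‖x‖ := by
    intro x hx
    have := mem_ball_zero_iff.mp hx
    linarith
  refine lt_of_le_of_lt (cross_bound n s hn hs0 measurableSet_ball hd hsep) ?_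
  refine ENNReal.mul_lt_top
    (ENNReal.mul_ne_top measure_ball_lt_top.ne ENNReal.ofReal_ne_top).lt_top ?_
  -- layer-cake finiteness of ∫ (R - ‖x‖)^(-s) over the ball
  have h1s : (1 : ℝ) < 1 / s := by
    rw [lt_div_iff₀ hs0]; linarith
  refine layer_fin n measurableSet_ball
    ((measurable_const.sub measurable_norm).pow measurable_const)
    (fun x hx => Real.rpow_nonneg (by linarith [mem_ball_zero_iff.mp hx]) _)
    (C := volume (ball (0 : Rn n) 1) * ENNReal.ofReal ((n : ℝ) * R ^ (n - 1)))
    (ENNReal.mul_ne_top measure_ball_lt_top.ne ENNReal.ofReal_ne_top)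
    (M := R) hR.le (b := -(1 / s)) (by linarith) ?_
  intro u hu
  rw [Measure.restrict_apply' measurableSet_ball]
  set h : ℝ := u ^ (-(1 / s)) with hh
  have hh0 : 0 < h := Real.rpow_pos_of_pos hu _
  set m : ℝ := min R h with hm
  have hm0 : 0 < m := lt_min hR hh0
  have hmR : m ≤ R := min_le_left _ _
  set aa : ℝ := R - m with haa
  have haa0 : 0 ≤ aa := by rw [haa]; linarith
  have haaR : aa ≤ R := by rw [haa]; linarith
  have hsub : {x : Rn n | u < (R - ‖x‖) ^ (-s)} ∩ ball (0 : Rn n) R ⊆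
      ball (0 : Rn n) R \ ball (0 : Rn n) aa := by
    rintro x ⟨hx1, hx2⟩
    simp only [Set.mem_setOf_eq] at hx1
    refine ⟨hx2, fun hx3 => ?_⟩
    have hxa : ‖x‖ < aa := mem_ball_zero_iff.mp hx3
    have hpos : 0 < R - ‖x‖ := by linarith
    have hlt : R - ‖x‖ < h := rpow_lt_aux hu hpos hs0 hx1
    have : m < R - ‖x‖ := by rw [haa] at hxa; linarith
    rcases min_lt_iff.mp this with h' | h'
    · have := norm_nonneg x; linarith
    · linarith
  refine (measure_mono hsub).trans ?_
  rw [measure_diff (ball_subset_ball haaR) measurableSet_ball.nullMeasurableSet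
    measure_ball_lt_top.ne]
  rw [Measure.addHaar_ball (μ := (volume : Measure (Rn n))) (0 : Rn n) hR.le,
    Measure.addHaar_ball (μ := (volume : Measure (Rn n))) (0 : Rn n) haa0,
    finrank_euclideanSpace_fin]
  rw [tsub_le_iff_right]
  have key : R ^ n ≤ (n : ℝ) * R ^ (n - 1) * m + aa ^ n := by
    have h5 := pow_sub_pow_le_aux n haa0 haaR
    have h6 : R - aa = m := by rw [haa]; ring
    rw [h6] at h5
    linarith
  calc ENNReal.ofReal (R ^ n) * volume (ball (0 : Rn n) 1)
      ≤ ENNReal.ofReal ((n : ℝ) * R ^ (n - 1) * m + aa ^ n) *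
          volume (ball (0 : Rn n) 1) := by
        exact mul_le_mul_left (ENNReal.ofReal_le_ofReal key) _
    _ = (ENNReal.ofReal ((n : ℝ) * R ^ (n - 1) * m) + ENNReal.ofReal (aa ^ n)) *
          volume (ball (0 : Rn n) 1) := by
        rw [ENNReal.ofReal_add (by positivity) (by positivity)]
    _ = volume (ball (0 : Rn n) 1) * ENNReal.ofReal ((n : ℝ) * R ^ (n - 1)) *
          ENNReal.ofReal (min R h) + ENNReal.ofReal (aa ^ n) *
          volume (ball (0 : Rn n) 1) := by
        rw [ENNReal.ofReal_mul (by positivity)]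
        rw [← hm]
        ring

lemma V_fin (n : ℕ) (s : ℝ) (hn : 0 < n) (hs0 : 0 < s) (hs1 : s < 1)
    {R : ℝ} (hR : 0 < R) :
    ∫⁻ x in ball (0 : Rn n) R ∩ halfSpace n,
      ∫⁻ y in (halfSpace n)ᶜ, iker n s x y < ⊤ := by
  haveI : Nonempty (Fin n) := ⟨⟨0, hn⟩⟩
  set i0 : Fin n := ⟨n - 1, Nat.sub_lt hn one_pos⟩ with hi0
  have hlc : ∀ x : Rn n, lastCoord n x = x i0 := by
    intro x
    rw [lastCoord, dif_pos hn]
  have hlcont : Continuous (lastCoord n) := by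
    have : lastCoord n = fun x : Rn n => x i0 := funext hlc
    rw [this]
    exact (EuclideanSpace.proj (𝕜 := ℝ) i0).continuous
  have hH : MeasurableSet (halfSpace n) := by
    have : halfSpace n = (lastCoord n) ⁻¹' (Ioi 0) := rfl
    rw [this]
    exact hlcont.measurable measurableSet_Ioi
  have hS : MeasurableSet (ball (0 : Rn n) R ∩ halfSpace n) :=
    measurableSet_ball.inter hH
  have hsep : ∀ x ∈ ball (0 : Rn n) R ∩ halfSpace n, ∀ y ∈ (halfSpace n)ᶜ,
      lastCoord n x ≤ ‖y - x‖ := by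
    intro x hx y hy
    have hxH : 0 < lastCoord n x := hx.2
    have hyH : lastCoord n y ≤ 0 := not_lt.mp hy
    have hsub : lastCoord n x - lastCoord n y = (x - y) i0 := by
      rw [hlc, hlc]; rfl
    have h1 : lastCoord n x ≤ lastCoord n x - lastCoord n y := by linarith
    have h2 : (x - y) i0 ≤ |(x - y) i0| := le_abs_self _
    have h3 := coord_le_norm n (x - y) i0
    rw [norm_sub_rev] at h3
    linarith [hsub ▸ h1]
  have hd : ∀ x ∈ ball (0 : Rn n) R ∩ halfSpace n, 0 < lastCoord n x :=
    fun x hx => hx.2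
  refine lt_of_le_of_lt (cross_bound n s hn hs0 hS hd hsep) ?_
  refine ENNReal.mul_lt_top
    (ENNReal.mul_ne_top measure_ball_lt_top.ne ENNReal.ofReal_ne_top).lt_top ?_
  have h1s : (1 : ℝ) < 1 / s := by rw [lt_div_iff₀ hs0]; linarith
  refine layer_fin n hS (hlcont.measurable.pow measurable_const)
    (fun x hx => Real.rpow_nonneg (hx.2 : 0 < lastCoord n x).le _)
    (C := ENNReal.ofReal (2 * R) ^ (n - 1))
    (ENNReal.pow_ne_top ENNReal.ofReal_ne_top)
    (M := R) hR.le (b := -(1 / s)) (by linarith) ?_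
  intro u hu
  rw [Measure.restrict_apply' hS]
  set h : ℝ := u ^ (-(1 / s)) with hh
  have hh0 : 0 < h := Real.rpow_pos_of_pos hu _
  set m : ℝ := min R h with hm
  have hm0 : 0 < m := lt_min hR hh0
  set sets : Fin n → Set ℝ := fun i => if i = i0 then Ioo 0 m else Ioo (-R) R
    with hsets
  have hsub : {x : Rn n | u < lastCoord n x ^ (-s)} ∩
      (ball (0 : Rn n) R ∩ halfSpace n) ⊆ {x : Rn n | ∀ i, x i ∈ sets i} := by
    rintro x ⟨hx1, hx2, hx3⟩
    simp only [Set.mem_setOf_eq] at hx1 ⊢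
    have hxR : ‖x‖ < R := mem_ball_zero_iff.mp hx2
    have hx0 : 0 < lastCoord n x := hx3
    have hlt : lastCoord n x < h := rpow_lt_aux hu hx0 hs0 hx1
    intro i
    have hgoal : x i ∈ if i = i0 then Ioo (0 : ℝ) m else Ioo (-R) R := by
      by_cases hii : i = i0
      · rw [if_pos hii, hii, ← hlc x]
        refine ⟨hx0, ?_⟩
        refine lt_min ?_ hlt
        calc lastCoord n x ≤ |x i0| := by rw [hlc x]; exact le_abs_self _
          _ ≤ ‖x‖ := coord_le_norm n x i0
          _ < R := hxR
      · rw [if_neg hii]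
        have := (coord_le_norm n x i).trans_lt hxR
        exact abs_lt.mp this
    simpa [hsets] using hgoal
  refine (measure_mono hsub).trans ?_
  rw [pi_vol n sets (fun i => by
    by_cases hii : i = i0 <;> simp [hsets, hii, measurableSet_Ioo])]
  have hprod : (∏ i, volume (sets i)) =
      volume (Ioo (0 : ℝ) m) * volume (Ioo (-R) R) ^ (n - 1) := by
    rw [← Finset.mul_prod_erase Finset.univ _ (Finset.mem_univ i0)]
    congr 1
    · simp [hsets]
    · rw [Finset.prod_congr rfl fun i hi => ?_, Finset.prod_const,
        Finset.card_erase_of_mem (Finset.mem_univ i0), Finset.card_univ,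
        Fintype.card_fin]
      simp [hsets, Finset.ne_of_mem_erase hi]
  rw [hprod, Real.volume_Ioo, Real.volume_Ioo]
  have h2R : R - -R = 2 * R := by ring
  rw [h2R, sub_zero, mul_comm]

lemma tendsto_setLIntegral_zero (n : ℕ) {g : Rn n → ℝ≥0∞} {S : Set (Rn n)}
    (hS : MeasurableSet S) (hfin : ∫⁻ z in S, g z ≠ ⊤)
    {D : ℕ → Set (Rn n)} (hD : ∀ k, MeasurableSet (D k))
    (hconv : ∀ K : Set (Rn n), IsCompact K →
      Tendsto (fun k => volume (D k ∩ K)) atTop (nhds 0)) :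
    Tendsto (fun k => ∫⁻ z in D k ∩ S, g z) atTop (nhds 0) := by
  rw [ENNReal.tendsto_nhds_zero]
  intro ε hε
  have hε2 : (0 : ℝ≥0∞) < ε / 2 := ENNReal.half_pos hε.ne'
  -- tail estimate via the finite measure `withDensity`
  have htail : Tendsto
      (fun m : ℕ => ((volume.restrict S).withDensity g) ((closedBall (0 : Rn n) m)ᶜ))
      atTop (nhds 0) := by
    have h2 := tendsto_measure_iInter_atTop
      (μ := (volume.restrict S).withDensity g)
      (s := fun m : ℕ => (closedBall (0 : Rn n) m)ᶜ)
      (fun m => measurableSet_closedBall.compl.nullMeasurableSet)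
      (fun m m' hmm' => compl_subset_compl.mpr
        (closedBall_subset_closedBall (by exact_mod_cast hmm')))
      ⟨0, by
        refine ne_top_of_le_ne_top ?_ (measure_mono (subset_univ _))
        rw [withDensity_apply _ MeasurableSet.univ, Measure.restrict_univ]
        exact hfin⟩
    have hint : (⋂ m : ℕ, (closedBall (0 : Rn n) (m : ℝ))ᶜ) = ∅ := by
      ext z
      simp only [Set.mem_iInter, Set.mem_compl_iff, Metric.mem_closedBall,
        dist_zero_right, Set.mem_empty_iff_false, iff_false, not_forall, not_not]
      obtain ⟨m, hm⟩ := exists_nat_ge ‖z‖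
      exact ⟨m, hm⟩
    rw [hint, measure_empty] at h2
    exact h2
  obtain ⟨m, hm⟩ := (ENNReal.tendsto_nhds_zero.mp htail (ε / 2) hε2).exists
  have hmval : ∫⁻ z in (closedBall (0 : Rn n) m)ᶜ, g z ∂(volume.restrict S) ≤ ε / 2 := by
    rwa [← withDensity_apply _ measurableSet_closedBall.compl]
  -- absolute continuity
  obtain ⟨dd, hdd0, hdd⟩ := exists_pos_setLIntegral_lt_of_measure_lt
    (μ := volume.restrict S) (f := g) hfin hε2.ne'
  have hev : ∀ᶠ k in atTop, volume (D k ∩ closedBall (0 : Rn n) m) < dd := by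
    have htc := hconv (closedBall (0 : Rn n) m) (isCompact_closedBall _ _)
    exact htc.eventually_lt_const hdd0
  filter_upwards [hev] with k hk
  have hcb : (volume.restrict S) (D k ∩ closedBall (0 : Rn n) m) < dd := by
    refine lt_of_le_of_lt ?_ hk
    rw [Measure.restrict_apply' hS]
    exact measure_mono inter_subset_left
  calc ∫⁻ z in D k ∩ S, g z
      = ∫⁻ z in D k, g z ∂(volume.restrict S) := by
        rw [Measure.restrict_restrict (hD k)]
    _ ≤ ∫⁻ z in (D k ∩ closedBall (0 : Rn n) m) ∪ (closedBall (0 : Rn n) m)ᶜ,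
          g z ∂(volume.restrict S) := by
        refine lintegral_mono_set fun z hz => ?_
        by_cases hzb : z ∈ closedBall (0 : Rn n) m
        · exact Or.inl ⟨hz, hzb⟩
        · exact Or.inr hzb
    _ ≤ (∫⁻ z in D k ∩ closedBall (0 : Rn n) m, g z ∂(volume.restrict S)) +
          ∫⁻ z in (closedBall (0 : Rn n) m)ᶜ, g z ∂(volume.restrict S) :=
        lintegral_union_le _ _ _
    _ ≤ ε / 2 + ε / 2 := add_le_add (hdd _ hcb).le hmval
    _ = ε := ENNReal.add_halves ε

lemma measure_symmDiff_tendsto (n : ℕ) {E : Set (Rn n)} (hE : MeasurableSet E)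
    {Ek : ℕ → Set (Rn n)} (hEk : ∀ k, MeasurableSet (Ek k))
    (hconv : TendstoL1loc n Ek E) (K : Set (Rn n)) (hK : IsCompact K) :
    Tendsto (fun k => volume (((E \ Ek k) ∪ (Ek k \ E)) ∩ K)) atTop (nhds 0) := by
  have hDm : ∀ k, MeasurableSet ((E \ Ek k) ∪ (Ek k \ E)) :=
    fun k => (hE.diff (hEk k)).union ((hEk k).diff hE)
  have key : ∀ k, (∫ x in K,
      |(Ek k).indicator (fun _ => (1 : ℝ)) x - E.indicator (fun _ => (1 : ℝ)) x|) =
      (volume (((E \ Ek k) ∪ (Ek k \ E)) ∩ K)).toReal := by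
    intro k
    have hpt : ∀ x, |(Ek k).indicator (fun _ => (1 : ℝ)) x -
        E.indicator (fun _ => (1 : ℝ)) x| =
        ((E \ Ek k) ∪ (Ek k \ E)).indicator (fun _ => (1 : ℝ)) x := by
      intro x
      by_cases h1 : x ∈ Ek k <;> by_cases h2 : x ∈ E <;>
        simp [Set.indicator_apply, h1, h2]
    calc (∫ x in K, |(Ek k).indicator (fun _ => (1 : ℝ)) x -
            E.indicator (fun _ => (1 : ℝ)) x|)
        = ∫ x in K, ((E \ Ek k) ∪ (Ek k \ E)).indicator (fun _ => (1 : ℝ)) x := by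
          exact integral_congr_ae (ae_of_all _ hpt)
      _ = ((volume.restrict K) ((E \ Ek k) ∪ (Ek k \ E))).toReal := by
          exact integral_indicator_one (hDm k)
      _ = (volume (((E \ Ek k) ∪ (Ek k \ E)) ∩ K)).toReal := by
          rw [Measure.restrict_apply (hDm k)]
  have h0 := (hconv K hK).congr key
  have hne : ∀ k, volume (((E \ Ek k) ∪ (Ek k \ E)) ∩ K) ≠ ⊤ :=
    fun k => ((measure_mono inter_subset_right).trans_lt hK.measure_lt_top).ne
  exact (ENNReal.tendsto_toReal_iff hne (by simp)).mp (by simpa using h0)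

end Stmt15Aux

set_option maxHeartbeats 4000000 in
/-- upper semicontinuity of localized interactions along minimizers. -/
theorem stmt_15 (n : ℕ) (hn : 2 ≤ n) (s σ : ℝ) (hs : s ∈ Set.Ioo (0 : ℝ) 1)
    (hσ : σ ∈ Set.Ioo (-1 : ℝ) 1) (r δ : ℝ) (hr : 0 < r) (hδ : 0 < δ)
    (E : Set (Rn n)) (hEmeas : MeasurableSet E) (hEH : E ⊆ halfSpace n)
    (hmin : LocalMin n s σ E)
    (Ek : ℕ → Set (Rn n)) (hEkmeas : ∀ k, MeasurableSet (Ek k))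
    (hEkH : ∀ k, Ek k ⊆ halfSpace n) (hEkmin : ∀ k, LocalMin n s σ (Ek k))
    (hconv : TendstoL1loc n Ek E) :
    limsup (fun k =>
        frIr n s (Ek k ∩ ball 0 (r + δ)) ((Ek k)ᶜ ∩ halfSpace n)
          + frIr n s (Ek k ∩ (ball 0 (r + δ))ᶜ) ((Ek k)ᶜ ∩ ball 0 (r + δ) ∩ halfSpace n))
      atTop
      ≤ frIr n s (E ∩ ball 0 (r + δ)) (Eᶜ ∩ halfSpace n)
        + frIr n s (E ∩ (ball 0 (r + δ))ᶜ) (Eᶜ ∩ ball 0 (r + δ) ∩ halfSpace n) := by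
  obtain ⟨hs0, hs1⟩ := hs
  obtain ⟨hσ1, hσ2⟩ := hσ
  have hn0 : 0 < n := by omega
  set R : ℝ := r + δ with hRdef
  have hR : 0 < R := by positivity
  -- measurability of the half space
  set i0 : Fin n := ⟨n - 1, Nat.sub_lt hn0 one_pos⟩ with hi0
  have hlc : ∀ x : Rn n, lastCoord n x = x i0 := fun x => by
    rw [lastCoord, dif_pos hn0]
  have hlcont : Continuous (lastCoord n) := by
    have h := funext hlc
    rw [h]
    exact (EuclideanSpace.proj (𝕜 := ℝ) i0).continuous
  have hH : MeasurableSet (halfSpace n) := by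
    have h : halfSpace n = (lastCoord n) ⁻¹' (Ioi 0) := rfl
    rw [h]
    exact hlcont.measurable measurableSet_Ioi
  have hB : MeasurableSet (ball (0 : Rn n) R) := measurableSet_ball
  -- the two auxiliary densities
  set g : Rn n → ℝ≥0∞ := fun z => ∫⁻ w in ball (0 : Rn n) R, iker n s z w with hg
  set gH : Rn n → ℝ≥0∞ := fun x => ∫⁻ y in (halfSpace n)ᶜ, iker n s x y with hgH
  have hWfin' : ∫⁻ x in ball (0 : Rn n) R, ∫⁻ y in (ball (0 : Rn n) R)ᶜ,
      iker n s x y < ⊤ := W_fin n s hn0 hs0 hs1 hR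
  have hWfin : ∫⁻ z in (ball (0 : Rn n) R)ᶜ, g z < ⊤ := by
    have h2 : ∀ z : Rn n, (∫⁻ w in ball (0 : Rn n) R, iker n s z w) =
        ∫⁻ w in ball (0 : Rn n) R, iker n s w z :=
      fun z => lintegral_congr fun w => iker_symm n s z w
    have h1 : ∫⁻ z in (ball (0 : Rn n) R)ᶜ, g z =
        ∫⁻ x in ball (0 : Rn n) R, ∫⁻ y in (ball (0 : Rn n) R)ᶜ, iker n s x y := by
      calc ∫⁻ z in (ball (0 : Rn n) R)ᶜ, g z
          = ∫⁻ z in (ball (0 : Rn n) R)ᶜ, ∫⁻ w in ball (0 : Rn n) R,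
              iker n s w z := lintegral_congr fun z => h2 z
        _ = ∫⁻ w in ball (0 : Rn n) R, ∫⁻ z in (ball (0 : Rn n) R)ᶜ,
              iker n s w z := by
            refine lintegral_lintegral_swap ?_
            exact ((measurable_iker n s).comp measurable_swap).aemeasurable
    rw [h1]
    exact hWfin'
  have hVfin : ∫⁻ x in ball (0 : Rn n) R ∩ halfSpace n, gH x < ⊤ :=
    V_fin n s hn0 hs0 hs1 hR
  have hCE : frI n s (E ∩ ball (0 : Rn n) R) (Eᶜ ∩ ball (0 : Rn n) R) < ⊤ :=
    (hmin R hR).1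
  -- finiteness of the two target pieces
  have hBtoB : frI n s (ball (0 : Rn n) R) (ball (0 : Rn n) R)ᶜ < ⊤ := by
    rw [frI_eq n s hB hB.compl]
    exact hWfin'
  have hT1 : frI n s (E ∩ ball (0 : Rn n) R) (Eᶜ ∩ halfSpace n) < ⊤ := by
    have hsplit : Eᶜ ∩ halfSpace n =
        ((Eᶜ ∩ halfSpace n) ∩ ball (0 : Rn n) R) ∪
          ((Eᶜ ∩ halfSpace n) ∩ (ball (0 : Rn n) R)ᶜ) :=
      (Set.inter_union_compl _ _).symm
    have h0 : frI n s (E ∩ ball (0 : Rn n) R) (Eᶜ ∩ halfSpace n) =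
        frI n s (E ∩ ball (0 : Rn n) R)
          (((Eᶜ ∩ halfSpace n) ∩ ball (0 : Rn n) R) ∪
            ((Eᶜ ∩ halfSpace n) ∩ (ball (0 : Rn n) R)ᶜ)) := by
      rw [← hsplit]
    calc frI n s (E ∩ ball (0 : Rn n) R) (Eᶜ ∩ halfSpace n)
        ≤ frI n s (E ∩ ball (0 : Rn n) R) ((Eᶜ ∩ halfSpace n) ∩ ball (0 : Rn n) R) +
            frI n s (E ∩ ball (0 : Rn n) R)
              ((Eᶜ ∩ halfSpace n) ∩ (ball (0 : Rn n) R)ᶜ) := by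
          rw [h0]
          exact frI_union_right n s _ _ _
      _ ≤ frI n s (E ∩ ball (0 : Rn n) R) (Eᶜ ∩ ball (0 : Rn n) R) +
            frI n s (ball (0 : Rn n) R) (ball (0 : Rn n) R)ᶜ := by
          refine add_le_add (frI_mono n s subset_rfl ?_) (frI_mono n s ?_ ?_)
          · rintro x ⟨⟨hx1, _⟩, hx2⟩; exact ⟨hx1, hx2⟩
          · exact inter_subset_right
          · exact inter_subset_right
      _ < ⊤ := ENNReal.add_lt_top.mpr ⟨hCE, hBtoB⟩
  have hT2 : frI n s (E ∩ (ball (0 : Rn n) R)ᶜ)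
      (Eᶜ ∩ ball (0 : Rn n) R ∩ halfSpace n) < ⊤ := by
    calc frI n s (E ∩ (ball (0 : Rn n) R)ᶜ) (Eᶜ ∩ ball (0 : Rn n) R ∩ halfSpace n)
        ≤ frI n s (ball (0 : Rn n) R)ᶜ (ball (0 : Rn n) R) := by
          refine frI_mono n s inter_subset_right ?_
          rintro x ⟨⟨_, hx2⟩, _⟩; exact hx2
      _ = ∫⁻ z in (ball (0 : Rn n) R)ᶜ, g z := frI_eq n s hB.compl hB
      _ < ⊤ := hWfin
  -- finiteness of the wetting terms
  have hseB : ∀ (A : Set (Rn n)), MeasurableSet A → A ⊆ ball (0 : Rn n) R ∩ halfSpace n →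
      frI n s A (halfSpace n)ᶜ ≤ ∫⁻ x in ball (0 : Rn n) R ∩ halfSpace n, gH x := by
    intro A hA hAsub
    rw [frI_eq n s hA hH.compl]
    exact lintegral_mono_set hAsub
  have hseF : frI n s (E ∩ ball (0 : Rn n) R) (halfSpace n)ᶜ ≠ ⊤ := by
    refine ((hseB _ (hEmeas.inter hB) ?_).trans_lt hVfin).ne
    rintro x ⟨hx1, hx2⟩; exact ⟨hx2, hEH hx1⟩
  have hsekF : ∀ k, frI n s (Ek k ∩ ball (0 : Rn n) R) (halfSpace n)ᶜ ≠ ⊤ := by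
    intro k
    refine ((hseB _ ((hEkmeas k).inter hB) ?_).trans_lt hVfin).ne
    rintro x ⟨hx1, hx2⟩; exact ⟨hx2, hEkH k hx1⟩
  -- the symmetric differences
  set D : ℕ → Set (Rn n) := fun k => (E \ Ek k) ∪ (Ek k \ E) with hD
  have hDm : ∀ k, MeasurableSet (D k) :=
    fun k => (hEmeas.diff (hEkmeas k)).union ((hEkmeas k).diff hEmeas)
  set ν : ℕ → ℝ≥0∞ := fun k => ∫⁻ z in D k ∩ (ball (0 : Rn n) R)ᶜ, g z with hν
  set η : ℕ → ℝ≥0∞ := fun k =>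
    ∫⁻ z in D k ∩ (ball (0 : Rn n) R ∩ halfSpace n), gH z with hη
  have hνF : ∀ k, ν k ≠ ⊤ :=
    fun k => ((lintegral_mono_set inter_subset_right).trans_lt hWfin).ne
  have hηF : ∀ k, η k ≠ ⊤ :=
    fun k => ((lintegral_mono_set inter_subset_right).trans_lt hVfin).ne
  have hνtend : Tendsto ν atTop (nhds 0) :=
    tendsto_setLIntegral_zero n hB.compl hWfin.ne hDm
      (measure_symmDiff_tendsto n hEmeas hEkmeas hconv)
  have hηtend : Tendsto η atTop (nhds 0) :=
    tendsto_setLIntegral_zero n (hB.inter hH) hVfin.ne hDm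
      (measure_symmDiff_tendsto n hEmeas hEkmeas hconv)
  -- the key inequality, for each k
  have hkey : ∀ k,
      frIr n s (Ek k ∩ ball (0 : Rn n) R) ((Ek k)ᶜ ∩ halfSpace n) +
        frIr n s (Ek k ∩ (ball (0 : Rn n) R)ᶜ)
          ((Ek k)ᶜ ∩ ball (0 : Rn n) R ∩ halfSpace n) ≤
      (frIr n s (E ∩ ball (0 : Rn n) R) (Eᶜ ∩ halfSpace n) +
        frIr n s (E ∩ (ball (0 : Rn n) R)ᶜ)
          (Eᶜ ∩ ball (0 : Rn n) R ∩ halfSpace n)) +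
        (2 * (ν k).toReal + (η k).toReal) := by
    intro k
    set F : Set (Rn n) := (E ∩ ball (0 : Rn n) R) ∪ (Ek k \ ball (0 : Rn n) R)
      with hFdef
    have hFmeas : MeasurableSet F := (hEmeas.inter hB).union ((hEkmeas k).diff hB)
    have hFH : F ⊆ halfSpace n := by
      rintro x (⟨hx1, _⟩ | ⟨hx1, _⟩)
      · exact hEH hx1
      · exact hEkH k hx1
    have hFdiffR : F \ ball (0 : Rn n) R = Ek k \ ball (0 : Rn n) R := by
      ext x
      simp only [hFdef, Set.mem_diff, Set.mem_union, Set.mem_inter_iff]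
      tauto
    have hminF := (hEkmin k R hR).2 F hFmeas hFH hFdiffR
    have hFB : F ∩ ball (0 : Rn n) R = E ∩ ball (0 : Rn n) R := by
      ext x
      simp only [hFdef, Set.mem_inter_iff, Set.mem_union, Set.mem_diff]
      tauto
    have hFBc : F ∩ (ball (0 : Rn n) R)ᶜ = Ek k ∩ (ball (0 : Rn n) R)ᶜ := by
      ext x
      simp only [hFdef, Set.mem_inter_iff, Set.mem_union, Set.mem_diff,
        Set.mem_compl_iff]
      tauto
    have hFcB : Fᶜ ∩ ball (0 : Rn n) R = Eᶜ ∩ ball (0 : Rn n) R := by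
      ext x
      simp only [hFdef, Set.mem_inter_iff, Set.mem_compl_iff, Set.mem_union,
        Set.mem_diff]
      tauto
    rw [hFB, hFBc, hFcB] at hminF
    -- bound the first right-hand side term
    have hT1split : frI n s (E ∩ ball (0 : Rn n) R) (Fᶜ ∩ halfSpace n) ≤
        frI n s (E ∩ ball (0 : Rn n) R) (Eᶜ ∩ halfSpace n) + ν k := by
      have hsub : Fᶜ ∩ halfSpace n ⊆
          (Eᶜ ∩ halfSpace n) ∪ (D k ∩ (ball (0 : Rn n) R)ᶜ) := by
        rintro x ⟨hxF, hxH⟩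
        simp only [hFdef, Set.mem_compl_iff, Set.mem_union, Set.mem_inter_iff,
          Set.mem_diff] at hxF
        by_cases hxE : x ∈ E
        · right
          have hxB : x ∉ ball (0 : Rn n) R := by tauto
          have hxk : x ∉ Ek k := by tauto
          exact ⟨show x ∈ (E \ Ek k) ∪ (Ek k \ E) from Or.inl ⟨hxE, hxk⟩, hxB⟩
        · exact Or.inl ⟨hxE, hxH⟩
      calc frI n s (E ∩ ball (0 : Rn n) R) (Fᶜ ∩ halfSpace n)
          ≤ frI n s (E ∩ ball (0 : Rn n) R)
              ((Eᶜ ∩ halfSpace n) ∪ (D k ∩ (ball (0 : Rn n) R)ᶜ)) :=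
            frI_mono n s subset_rfl hsub
        _ ≤ frI n s (E ∩ ball (0 : Rn n) R) (Eᶜ ∩ halfSpace n) +
              frI n s (E ∩ ball (0 : Rn n) R) (D k ∩ (ball (0 : Rn n) R)ᶜ) :=
            frI_union_right n s _ _ _
        _ ≤ frI n s (E ∩ ball (0 : Rn n) R) (Eᶜ ∩ halfSpace n) + ν k := by
            refine add_le_add_right ?_ _
            rw [frI_swap n s (hEmeas.inter hB) ((hDm k).inter hB.compl)]
            refine lintegral_mono fun y => ?_
            calc ∫⁻ x in E ∩ ball (0 : Rn n) R, iker n s x y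
                ≤ ∫⁻ x in ball (0 : Rn n) R, iker n s x y :=
                  lintegral_mono_set inter_subset_right
              _ = g y := lintegral_congr fun x => iker_symm n s x y
    -- bound the second right-hand side term
    have hT2split : frI n s (Ek k ∩ (ball (0 : Rn n) R)ᶜ)
        (Eᶜ ∩ ball (0 : Rn n) R ∩ halfSpace n) ≤
        frI n s (E ∩ (ball (0 : Rn n) R)ᶜ)
          (Eᶜ ∩ ball (0 : Rn n) R ∩ halfSpace n) + ν k := by
      have hsub : Ek k ∩ (ball (0 : Rn n) R)ᶜ ⊆
          (E ∩ (ball (0 : Rn n) R)ᶜ) ∪ (D k ∩ (ball (0 : Rn n) R)ᶜ) := by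
        rintro x ⟨hx1, hx2⟩
        by_cases hxE : x ∈ E
        · exact Or.inl ⟨hxE, hx2⟩
        · exact Or.inr ⟨show x ∈ (E \ Ek k) ∪ (Ek k \ E) from
            Or.inr ⟨hx1, hxE⟩, hx2⟩
      calc frI n s (Ek k ∩ (ball (0 : Rn n) R)ᶜ)
            (Eᶜ ∩ ball (0 : Rn n) R ∩ halfSpace n)
          ≤ frI n s ((E ∩ (ball (0 : Rn n) R)ᶜ) ∪ (D k ∩ (ball (0 : Rn n) R)ᶜ))
              (Eᶜ ∩ ball (0 : Rn n) R ∩ halfSpace n) :=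
            frI_mono n s hsub subset_rfl
        _ ≤ frI n s (E ∩ (ball (0 : Rn n) R)ᶜ)
              (Eᶜ ∩ ball (0 : Rn n) R ∩ halfSpace n) +
            frI n s (D k ∩ (ball (0 : Rn n) R)ᶜ)
              (Eᶜ ∩ ball (0 : Rn n) R ∩ halfSpace n) :=
            frI_union_left n s _ _ _
        _ ≤ frI n s (E ∩ (ball (0 : Rn n) R)ᶜ)
              (Eᶜ ∩ ball (0 : Rn n) R ∩ halfSpace n) + ν k := by
            refine add_le_add_right ?_ _
            rw [frI_eq n s ((hDm k).inter hB.compl) ((hEmeas.compl.inter hB).inter hH)]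
            refine lintegral_mono fun z => ?_
            exact lintegral_mono_set fun y hy => hy.1.2
    -- bound the wetting terms
    have hse1 : frI n s (E ∩ ball (0 : Rn n) R) (halfSpace n)ᶜ ≤
        frI n s (Ek k ∩ ball (0 : Rn n) R) (halfSpace n)ᶜ + η k := by
      have hsub : E ∩ ball (0 : Rn n) R ⊆
          (Ek k ∩ ball (0 : Rn n) R) ∪ (D k ∩ (ball (0 : Rn n) R ∩ halfSpace n)) := by
        rintro x ⟨hx1, hx2⟩
        by_cases hxk : x ∈ Ek k
        · exact Or.inl ⟨hxk, hx2⟩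
        · exact Or.inr ⟨show x ∈ (E \ Ek k) ∪ (Ek k \ E) from
            Or.inl ⟨hx1, hxk⟩, hx2, hEH hx1⟩
      calc frI n s (E ∩ ball (0 : Rn n) R) (halfSpace n)ᶜ
          ≤ frI n s ((Ek k ∩ ball (0 : Rn n) R) ∪
              (D k ∩ (ball (0 : Rn n) R ∩ halfSpace n))) (halfSpace n)ᶜ :=
            frI_mono n s hsub subset_rfl
        _ ≤ frI n s (Ek k ∩ ball (0 : Rn n) R) (halfSpace n)ᶜ +
            frI n s (D k ∩ (ball (0 : Rn n) R ∩ halfSpace n)) (halfSpace n)ᶜ :=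
            frI_union_left n s _ _ _
        _ ≤ frI n s (Ek k ∩ ball (0 : Rn n) R) (halfSpace n)ᶜ + η k := by
            refine add_le_add_right ?_ _
            rw [frI_eq n s ((hDm k).inter (hB.inter hH)) hH.compl]
    have hse2 : frI n s (Ek k ∩ ball (0 : Rn n) R) (halfSpace n)ᶜ ≤
        frI n s (E ∩ ball (0 : Rn n) R) (halfSpace n)ᶜ + η k := by
      have hsub : Ek k ∩ ball (0 : Rn n) R ⊆
          (E ∩ ball (0 : Rn n) R) ∪ (D k ∩ (ball (0 : Rn n) R ∩ halfSpace n)) := by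
        rintro x ⟨hx1, hx2⟩
        by_cases hxE : x ∈ E
        · exact Or.inl ⟨hxE, hx2⟩
        · exact Or.inr ⟨show x ∈ (E \ Ek k) ∪ (Ek k \ E) from
            Or.inr ⟨hx1, hxE⟩, hx2, hEkH k hx1⟩
      calc frI n s (Ek k ∩ ball (0 : Rn n) R) (halfSpace n)ᶜ
          ≤ frI n s ((E ∩ ball (0 : Rn n) R) ∪
              (D k ∩ (ball (0 : Rn n) R ∩ halfSpace n))) (halfSpace n)ᶜ :=
            frI_mono n s hsub subset_rfl
        _ ≤ frI n s (E ∩ ball (0 : Rn n) R) (halfSpace n)ᶜ +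
            frI n s (D k ∩ (ball (0 : Rn n) R ∩ halfSpace n)) (halfSpace n)ᶜ :=
            frI_union_left n s _ _ _
        _ ≤ frI n s (E ∩ ball (0 : Rn n) R) (halfSpace n)ᶜ + η k := by
            refine add_le_add_right ?_ _
            rw [frI_eq n s ((hDm k).inter (hB.inter hH)) hH.compl]
    -- pass to real numbers
    have e1 : frIr n s (E ∩ ball (0 : Rn n) R) (Fᶜ ∩ halfSpace n) ≤
        frIr n s (E ∩ ball (0 : Rn n) R) (Eᶜ ∩ halfSpace n) + (ν k).toReal := by
      have h3 := ENNReal.toReal_mono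
        (ENNReal.add_ne_top.mpr ⟨hT1.ne, hνF k⟩) hT1split
      rwa [ENNReal.toReal_add hT1.ne (hνF k)] at h3
    have e2 : frIr n s (Ek k ∩ (ball (0 : Rn n) R)ᶜ)
        (Eᶜ ∩ ball (0 : Rn n) R ∩ halfSpace n) ≤
        frIr n s (E ∩ (ball (0 : Rn n) R)ᶜ)
          (Eᶜ ∩ ball (0 : Rn n) R ∩ halfSpace n) + (ν k).toReal := by
      have h3 := ENNReal.toReal_mono
        (ENNReal.add_ne_top.mpr ⟨hT2.ne, hνF k⟩) hT2split
      rwa [ENNReal.toReal_add hT2.ne (hνF k)] at h3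
    have d1 : frIr n s (E ∩ ball (0 : Rn n) R) (halfSpace n)ᶜ ≤
        frIr n s (Ek k ∩ ball (0 : Rn n) R) (halfSpace n)ᶜ + (η k).toReal := by
      have h3 := ENNReal.toReal_mono
        (ENNReal.add_ne_top.mpr ⟨hsekF k, hηF k⟩) hse1
      rwa [ENNReal.toReal_add (hsekF k) (hηF k)] at h3
    have d2 : frIr n s (Ek k ∩ ball (0 : Rn n) R) (halfSpace n)ᶜ ≤
        frIr n s (E ∩ ball (0 : Rn n) R) (halfSpace n)ᶜ + (η k).toReal := by
      have h3 := ENNReal.toReal_mono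
        (ENNReal.add_ne_top.mpr ⟨hseF, hηF k⟩) hse2
      rwa [ENNReal.toReal_add hseF (hηF k)] at h3
    have hsig : σ * frIr n s (E ∩ ball (0 : Rn n) R) (halfSpace n)ᶜ -
        σ * frIr n s (Ek k ∩ ball (0 : Rn n) R) (halfSpace n)ᶜ ≤ (η k).toReal := by
      have habs : |frIr n s (E ∩ ball (0 : Rn n) R) (halfSpace n)ᶜ -
          frIr n s (Ek k ∩ ball (0 : Rn n) R) (halfSpace n)ᶜ| ≤ (η k).toReal :=
        abs_le.mpr ⟨by linarith, by linarith⟩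
      have hsabs : |σ| ≤ 1 := abs_le.mpr ⟨hσ1.le, hσ2.le⟩
      calc σ * frIr n s (E ∩ ball (0 : Rn n) R) (halfSpace n)ᶜ -
            σ * frIr n s (Ek k ∩ ball (0 : Rn n) R) (halfSpace n)ᶜ
          ≤ |σ * (frIr n s (E ∩ ball (0 : Rn n) R) (halfSpace n)ᶜ -
              frIr n s (Ek k ∩ ball (0 : Rn n) R) (halfSpace n)ᶜ)| := by
            rw [← mul_sub]; exact le_abs_self _
        _ = |σ| * |frIr n s (E ∩ ball (0 : Rn n) R) (halfSpace n)ᶜ -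
              frIr n s (Ek k ∩ ball (0 : Rn n) R) (halfSpace n)ᶜ| := abs_mul _ _
        _ ≤ 1 * (η k).toReal := by
            refine mul_le_mul hsabs habs (abs_nonneg _) zero_le_one
        _ = (η k).toReal := one_mul _
    linarith [hminF, e1, e2, hsig]
  -- pass to the limit
  have hν0 : Tendsto (fun k => (ν k).toReal) atTop (nhds 0) := by
    have := (ENNReal.tendsto_toReal (by simp : (0 : ℝ≥0∞) ≠ ⊤)).comp hνtend
    simpa [Function.comp_def] using this
  have hη0 : Tendsto (fun k => (η k).toReal) atTop (nhds 0) := by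
    have := (ENNReal.tendsto_toReal (by simp : (0 : ℝ≥0∞) ≠ ⊤)).comp hηtend
    simpa [Function.comp_def] using this
  set Tlim : ℝ := frIr n s (E ∩ ball (0 : Rn n) R) (Eᶜ ∩ halfSpace n) +
    frIr n s (E ∩ (ball (0 : Rn n) R)ᶜ) (Eᶜ ∩ ball (0 : Rn n) R ∩ halfSpace n)
    with hTlim
  have hu : Tendsto (fun k => Tlim + (2 * (ν k).toReal + (η k).toReal))
      atTop (nhds Tlim) := by
    have h1 : Tendsto (fun k => 2 * (ν k).toReal + (η k).toReal) atTop (nhds 0) := by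
      have := (hν0.const_mul 2).add hη0
      simpa using this
    have h2 := (tendsto_const_nhds :
      Tendsto (fun _ : ℕ => Tlim) atTop (nhds Tlim)).add h1
    simpa using h2
  calc limsup (fun k =>
      frIr n s (Ek k ∩ ball (0 : Rn n) R) ((Ek k)ᶜ ∩ halfSpace n) +
        frIr n s (Ek k ∩ (ball (0 : Rn n) R)ᶜ)
          ((Ek k)ᶜ ∩ ball (0 : Rn n) R ∩ halfSpace n)) atTop
      ≤ limsup (fun k => Tlim + (2 * (ν k).toReal + (η k).toReal)) atTop := by
        refine Filter.limsup_le_limsup (Filter.Eventually.of_forall hkey) ?_ ?_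
        · refine Filter.isCoboundedUnder_le_of_le atTop (x := 0) fun k => ?_
          exact add_nonneg ENNReal.toReal_nonneg ENNReal.toReal_nonneg
        · exact hu.isBoundedUnder_le
    _ = Tlim := hu.limsup_eq
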